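/- Let D be a chord diagram containing a weak RII pair α = {i, j}, β = {i+1, j+1} (where i, i+1, j, j+1 are distinct points in this cyclic order), let D' be obtained from D by deleting α and β, and let k be the number of chords other than β crossing α. Then T(D) ≡ T(D') + k (mod 2); in particular, if D is evenly interlaced then T(D) − T(D') is odd. (This is the paper's claim that one weak RII move changes the triple-chord count by an odd number.) -/

import Mathlib

/-- A chord diagram on `2 * n` points: a fixed-point-free involution of `ZMod (2 * n)`.
Its two-element orbits are called chords; the points lie on a circle in their
natural cyclic order. -/
structure ChordDiagram (n : ℕ) where
  inv : ZMod (2 * n) → ZMod (2 * n)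
  involutive : Function.Involutive inv
  fixedPointFree : ∀ x, inv x ≠ x

/-- A chord: an unordered pair of points of the circle `ZMod m`. -/
abbrev Chord (m : ℕ) := Sym2 (ZMod m)

/-- `x` lies in the open cyclic arc running counterclockwise from `a` to `b`. -/
def InArc {m : ℕ} (a b x : ZMod m) : Prop :=
  0 < (x - a).val ∧ (x - a).val < (b - a).val

/-- Two chords cross: exactly one endpoint of the second lies in the open cyclic arc
bounded by the first. -/
def Chord.Crosses {m : ℕ} (e f : Chord m) : Prop :=
  ∃ a b c d : ZMod m, e = s(a, b) ∧ f = s(c, d) ∧ Xor' (InArc a b c) (InArc a b d)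

/-- The set of chords of a chord diagram. -/
def ChordDiagram.chords {n : ℕ} (D : ChordDiagram n) : Set (Chord (2 * n)) :=
  {e | ∃ x, e = s(x, D.inv x)}

/-- `P` is an (unordered) pair of crossing chords of `D`. -/
def ChordDiagram.IsCrossingPair {n : ℕ} (D : ChordDiagram n)
    (P : Finset (Chord (2 * n))) : Prop :=
  P.card = 2 ∧ (∀ e ∈ P, e ∈ D.chords) ∧
    ∀ e ∈ P, ∀ f ∈ P, e ≠ f → Chord.Crosses e f

/-- `P` is an (unordered) triple of pairwise crossing chords of `D`. -/
def ChordDiagram.IsTripleChord {n : ℕ} (D : ChordDiagram n)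
    (P : Finset (Chord (2 * n))) : Prop :=
  P.card = 3 ∧ (∀ e ∈ P, e ∈ D.chords) ∧
    ∀ e ∈ P, ∀ f ∈ P, e ≠ f → Chord.Crosses e f

/-- `P` is an H-triple of `D`: a triple `{a, b, c}` of chords of `D` such that `c`
crosses both `a` and `b` while `a` and `b` do not cross. -/
def ChordDiagram.IsHTriple {n : ℕ} (D : ChordDiagram n)
    (P : Finset (Chord (2 * n))) : Prop :=
  P.card = 3 ∧ (∀ e ∈ P, e ∈ D.chords) ∧
    ∃ c ∈ P, (∀ e ∈ P, e ≠ c → Chord.Crosses c e) ∧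
      ∀ a ∈ P, ∀ b ∈ P, a ≠ c → b ≠ c → a ≠ b → ¬ Chord.Crosses a b

/-- `X D`: the number of unordered pairs of chords of `D` that cross. -/
noncomputable def ChordDiagram.X {n : ℕ} (D : ChordDiagram n) : ℕ :=
  Set.ncard {P | D.IsCrossingPair P}

/-- `T D`: the number of unordered triples of chords of `D` that pairwise cross. -/
noncomputable def ChordDiagram.T {n : ℕ} (D : ChordDiagram n) : ℕ :=
  Set.ncard {P | D.IsTripleChord P}

/-- `H D`: the number of H-triples of `D`. -/
noncomputable def ChordDiagram.H {n : ℕ} (D : ChordDiagram n) : ℕ :=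
  Set.ncard {P | D.IsHTriple P}

/-- `D'` is obtained from `D` by deleting the set `S` of chords: deletion removes the
chords of `S` together with their endpoints and reindexes the remaining points
preserving their cyclic order; in particular it induces a bijection between the
remaining chords of `D` and the chords of `D'` preserving all crossing relations. -/
def ChordDiagram.DeletionOf {n n' : ℕ} (D : ChordDiagram n) (S : Set (Chord (2 * n)))
    (D' : ChordDiagram n') : Prop :=
  ∃ φ : {e : Chord (2 * n) // e ∈ D.chords ∧ e ∉ S} ≃
      {e : Chord (2 * n') // e ∈ D'.chords},
    ∀ e f, Chord.Crosses e.1 f.1 ↔ Chord.Crosses (φ e).1 (φ f).1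

/-- Four points occurring in this (strict counterclockwise) cyclic order;
in particular they are pairwise distinct. -/
def CyclicOrd4 {m : ℕ} (a b c d : ZMod m) : Prop :=
  0 < (b - a).val ∧ (b - a).val < (c - a).val ∧ (c - a).val < (d - a).val

/-- Six points occurring in this (strict counterclockwise) cyclic order;
in particular they are pairwise distinct. -/
def CyclicOrd6 {m : ℕ} (a b c d e f : ZMod m) : Prop :=
  0 < (b - a).val ∧ (b - a).val < (c - a).val ∧ (c - a).val < (d - a).val ∧
    (d - a).val < (e - a).val ∧ (e - a).val < (f - a).val

/-- `D` is evenly interlaced: every chord of `D` crosses an even number of chords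
of `D` (true for the Gauss diagram of every knot projection). -/
def ChordDiagram.EvenlyInterlaced {n : ℕ} (D : ChordDiagram n) : Prop :=
  ∀ e ∈ D.chords, Even (Set.ncard {f | f ∈ D.chords ∧ Chord.Crosses e f})

/-- Exactly two of the three propositions hold. -/
def ExactlyTwo (A B C : Prop) : Prop :=
  (A ∧ B ∧ ¬ C) ∨ (A ∧ ¬ B ∧ C) ∨ (¬ A ∧ B ∧ C)

/-- A strong RIII move: the three pairwise crossing chords `{p, q+1}`, `{q, r+1}`,
`{r, p+1}` (where `p, p+1, q, q+1, r, r+1` occur in this cyclic order) are replaced by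
the three chords `{p+1, q}`, `{q+1, r}`, `{r+1, p}`, all other chords being unchanged. -/
def ChordDiagram.StrongRIII {n : ℕ} (D D' : ChordDiagram n) : Prop :=
  ∃ p q r : ZMod (2 * n), CyclicOrd6 p (p + 1) q (q + 1) r (r + 1) ∧
    s(p, q + 1) ∈ D.chords ∧ s(q, r + 1) ∈ D.chords ∧ s(r, p + 1) ∈ D.chords ∧
    D'.chords = (D.chords \ {s(p, q + 1), s(q, r + 1), s(r, p + 1)}) ∪
      {s(p + 1, q), s(q + 1, r), s(r + 1, p)}


section Helpers
variable {m : ℕ} [NeZero m]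

private lemma val_sub' (u v : ZMod m) :
    (u - v).val = if v.val ≤ u.val then u.val - v.val else u.val + m - v.val := by
  have h : (u - v + v).val = ((u - v).val + v.val) % m := ZMod.val_add _ _
  rw [sub_add_cancel] at h
  have h1 := ZMod.val_lt (u - v)
  have h2 := ZMod.val_lt v
  have h3 := ZMod.val_lt u
  rcases Nat.lt_or_ge ((u - v).val + v.val) m with h' | h'
  · rw [Nat.mod_eq_of_lt h'] at h; split_ifs <;> omega
  · have : ((u - v).val + v.val) % m = (u - v).val + v.val - m := by
      rw [Nat.mod_eq_sub_mod h', Nat.mod_eq_of_lt (by omega)]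
    rw [this] at h; split_ifs <;> omega

private lemma ne_iff_val_sub {u v : ZMod m} : u ≠ v ↔ (u - v).val ≠ 0 := by
  constructor
  · intro h hc; exact h (sub_eq_zero.mp ((ZMod.val_eq_zero _).mp hc))
  · intro h hc; exact h (by rw [hc, sub_self, ZMod.val_zero])

private lemma ne_iff_val_ne {a u v : ZMod m} : u ≠ v ↔ (u - a).val ≠ (v - a).val := by
  constructor
  · intro h hv
    have h2 : u - a = v - a := ZMod.val_injective m hv
    exact h (by have := sub_left_injective h2; exact this)
  · intro h hv; exact h (by rw [hv])

private lemma inArc_compl {a b x : ZMod m} (hab : a ≠ b) (hxa : x ≠ a) (hxb : x ≠ b) :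
    InArc b a x ↔ ¬ InArc a b x := by
  have e1 : x - b = (x - a) - (b - a) := by ring
  have e2 : a - b = (0 : ZMod m) - (b - a) := by ring
  have hA : (x - a).val ≠ 0 := ne_iff_val_sub.mp hxa
  have hB : (b - a).val ≠ 0 := ne_iff_val_sub.mp (Ne.symm hab)
  have hAB : (x - a).val ≠ (b - a).val := ne_iff_val_ne.mp hxb
  have h1 := ZMod.val_lt (x - a)
  have h2 := ZMod.val_lt (b - a)
  simp only [InArc, e1, e2]
  rw [val_sub' (x - a) (b - a), val_sub' 0 (b - a), ZMod.val_zero]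
  split_ifs <;> omega

private lemma xor_swap {a b c d : ZMod m} (hab : a ≠ b) (hca : c ≠ a) (hcb : c ≠ b)
    (hda : d ≠ a) (hdb : d ≠ b) :
    Xor' (InArc b a c) (InArc b a d) ↔ Xor' (InArc a b c) (InArc a b d) := by
  rw [inArc_compl hab hca hcb, inArc_compl hab hda hdb]
  unfold Xor' Xor; tauto

private lemma xor_inArc_symm {a b c d : ZMod m} (hab : a ≠ b) (hac : a ≠ c) (had : a ≠ d)
    (hbc : b ≠ c) (hbd : b ≠ d) (hcd : c ≠ d) :
    Xor' (InArc a b c) (InArc a b d) ↔ Xor' (InArc c d a) (InArc c d b) := by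
  have e1 : a - c = (0 : ZMod m) - (c - a) := by ring
  have e2 : b - c = (b - a) - (c - a) := by ring
  have e3 : d - c = (d - a) - (c - a) := by ring
  have hB : (b - a).val ≠ 0 := ne_iff_val_sub.mp (Ne.symm hab)
  have hC : (c - a).val ≠ 0 := ne_iff_val_sub.mp (Ne.symm hac)
  have hD : (d - a).val ≠ 0 := ne_iff_val_sub.mp (Ne.symm had)
  have hBC : (b - a).val ≠ (c - a).val := ne_iff_val_ne.mp hbc
  have hBD : (b - a).val ≠ (d - a).val := ne_iff_val_ne.mp hbd
  have hCD : (c - a).val ≠ (d - a).val := ne_iff_val_ne.mp hcd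
  have h1 := ZMod.val_lt (b - a)
  have h2 := ZMod.val_lt (c - a)
  have h3 := ZMod.val_lt (d - a)
  simp only [InArc, Xor', Xor, e1, e2, e3]
  rw [val_sub' 0 (c - a), val_sub' (b - a) (c - a), val_sub' (d - a) (c - a),
    ZMod.val_zero]
  split_ifs <;> omega

private lemma val_add_one_of_ne {x : ZMod m} (h : x + 1 ≠ 0) :
    (x + 1).val = x.val + 1 := by
  have h1 := ZMod.val_lt x
  have h2 : (x + 1).val = (x.val + ZMod.val (1 : ZMod m)) % m := ZMod.val_add x 1
  rcases Nat.lt_or_ge m 2 with hm | hm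
  · interval_cases m
    · exact absurd rfl (NeZero.ne 0)
    · exact absurd (Subsingleton.elim _ _) h
  · have hv1 : ZMod.val (1 : ZMod m) = 1 := ZMod.val_one_eq_one_mod m ▸ Nat.mod_eq_of_lt hm
    rw [hv1] at h2
    rcases Nat.lt_or_ge (x.val + 1) m with h' | h'
    · rw [Nat.mod_eq_of_lt h'] at h2; omega
    · have : x.val + 1 = m := by omega
      rw [this, Nat.mod_self] at h2
      exact absurd ((ZMod.val_eq_zero _).mp h2) h

private lemma inArc_shift {c d x : ZMod m} (hxc : x ≠ c) (hxd : x ≠ d)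
    (hxc1 : x + 1 ≠ c) (hxd1 : x + 1 ≠ d) :
    InArc c d x ↔ InArc c d (x + 1) := by
  have e1 : x + 1 - c = (x - c) + 1 := by ring
  have hne : (x - c) + 1 ≠ 0 := by
    rw [← e1]; intro h; exact hxc1 (by rwa [sub_eq_zero] at h)
  have hT : (x - c).val ≠ 0 := ne_iff_val_sub.mp hxc
  have hTD : (x - c).val ≠ (d - c).val := ne_iff_val_ne.mp hxd
  have hTD1 : ((x - c) + 1).val ≠ (d - c).val := by
    rw [← e1]; exact ne_iff_val_ne.mp hxd1
  have hv : ((x - c) + 1).val = (x - c).val + 1 := val_add_one_of_ne hne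
  simp only [InArc, e1, hv]
  rw [hv] at hTD1
  omega

private lemma inArc_succ_pair {i j c : ZMod m} (hJ1 : 1 < (j - i).val)
    (hJm : (j - i).val + 1 < m)
    (hci : c ≠ i) (hci1 : c ≠ i + 1) (hcj : c ≠ j) :
    InArc i j c ↔ InArc (i + 1) (j + 1) c := by
  haveI : Fact (1 < m) := ⟨by omega⟩
  have e1 : c - (i + 1) = (c - i) - 1 := by ring
  have e2 : j + 1 - (i + 1) = j - i := by ring
  have hu0 : (c - i).val ≠ 0 := ne_iff_val_sub.mp hci
  have hu1 : (c - i).val ≠ 1 := by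
    have h := (ne_iff_val_ne (a := i)).mp hci1
    rwa [show i + 1 - i = (1 : ZMod m) by ring, ZMod.val_one] at h
  have huJ : (c - i).val ≠ (j - i).val := ne_iff_val_ne.mp hcj
  have hvlt := ZMod.val_lt (c - i)
  simp only [InArc, e1, e2]
  rw [val_sub' (c - i) 1, ZMod.val_one]
  split_ifs <;> omega

private lemma not_crosses_self (e : Chord m) : ¬ e.Crosses e := by
  rintro ⟨a, b, c, d, h1, h2, hx⟩
  rw [h1, Sym2.eq_iff] at h2
  have hxa : ¬ InArc a b a := by simp [InArc, sub_self]
  have hxb : ¬ InArc a b b := fun h => lt_irrefl _ h.2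
  unfold Xor' Xor at hx
  rcases h2 with ⟨h3, h4⟩ | ⟨h3, h4⟩ <;> subst h3 <;> subst h4 <;> tauto

private lemma crosses_iff {a b c d : ZMod m} (hab : a ≠ b) (hca : c ≠ a) (hcb : c ≠ b)
    (hda : d ≠ a) (hdb : d ≠ b) :
    Chord.Crosses s(a, b) s(c, d) ↔ Xor' (InArc a b c) (InArc a b d) := by
  constructor
  · rintro ⟨a', b', c', d', h1, h2, hx⟩
    rw [Sym2.eq_iff] at h1 h2
    rcases h1 with ⟨h, h'⟩ | ⟨h, h'⟩ <;> rcases h2 with ⟨g, g'⟩ | ⟨g, g'⟩ <;>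
      subst h <;> subst h' <;> subst g <;> subst g'
    · exact hx
    · rwa [Xor', _root_.xor_comm]
    · exact (xor_swap hab hca hcb hda hdb).mp hx
    · rw [Xor', _root_.xor_comm]; exact (xor_swap hab hda hdb hca hcb).mp hx
  · intro h; exact ⟨a, b, c, d, rfl, rfl, h⟩

end Helpers

section FinsetHelpers
variable {γ : Type*} [DecidableEq γ]

private lemma triple_extract {P : Finset γ} {x y : γ} (hP : P.card = 3)
    (hx : x ∈ P) (hy : y ∈ P) (hxy : x ≠ y) :
    ∃ e, e ∈ P ∧ e ≠ x ∧ e ≠ y ∧ P = {x, y, e} := by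
  have hy' : y ∈ P.erase x := Finset.mem_erase.mpr ⟨hxy.symm, hy⟩
  have h1 : ((P.erase x).erase y).card = 1 := by
    rw [Finset.card_erase_of_mem hy', Finset.card_erase_of_mem hx, hP]
  obtain ⟨e, he⟩ := Finset.card_eq_one.mp h1
  have heP : e ∈ (P.erase x).erase y := he ▸ Finset.mem_singleton_self e
  have h2 := Finset.mem_erase.mp heP
  have h3 := Finset.mem_erase.mp h2.2
  refine ⟨e, h3.2, h3.1, h2.1, ?_⟩
  have h5 : insert y ((P.erase x).erase y) = P.erase x := Finset.insert_erase hy'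
  have h4 : insert x (insert y ((P.erase x).erase y)) = P := by
    rw [h5, Finset.insert_erase hx]
  rw [← h4, he]

private lemma pair_extract {P : Finset γ} {x : γ} (hP : P.card = 3) (hx : x ∈ P) :
    ∃ e f, e ∈ P ∧ f ∈ P ∧ e ≠ x ∧ f ≠ x ∧ e ≠ f ∧ P = {x, e, f} := by
  have h1 : (P.erase x).card = 2 := by rw [Finset.card_erase_of_mem hx, hP]
  obtain ⟨e, f, hef, hQ⟩ := Finset.card_eq_two.mp h1
  have heP : e ∈ P.erase x := hQ ▸ Finset.mem_insert_self e {f}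
  have hfP : f ∈ P.erase x := hQ ▸ by simp
  refine ⟨e, f, (Finset.mem_erase.mp heP).2, (Finset.mem_erase.mp hfP).2,
    (Finset.mem_erase.mp heP).1, (Finset.mem_erase.mp hfP).1, hef, ?_⟩
  rw [show ({x, e, f} : Finset γ) = insert x {e, f} from rfl, ← hQ, Finset.insert_erase hx]

end FinsetHelpers

private lemma inv_eq_of_chord {n : ℕ} (D : ChordDiagram n) {a b : ZMod (2 * n)}
    (hc : s(a, b) ∈ D.chords) : D.inv a = b := by
  obtain ⟨x, hx⟩ := hc
  rw [Sym2.eq_iff] at hx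
  rcases hx with ⟨rfl, rfl⟩ | ⟨ha, rfl⟩
  · rfl
  · rw [ha]; exact D.involutive _

set_option maxHeartbeats 2000000 in
/-- deleting a weak RII pair `α = {i, j}`, `β = {i+1, j+1}` changes the
triple-chord count `T` by `k` modulo 2, where `k` is the number of chords other than
`β` crossing `α`; in particular if `D` is evenly interlaced then `T(D) − T(D')` is odd. -/
theorem weak_RII_changes_T_by_odd (n : ℕ) (D : ChordDiagram (n + 2)) (D' : ChordDiagram n)
    (i j : ZMod (2 * (n + 2)))
    (hord : CyclicOrd4 i (i + 1) j (j + 1))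
    (hα : s(i, j) ∈ D.chords) (hβ : s(i + 1, j + 1) ∈ D.chords)
    (hdel : D.DeletionOf {s(i, j), s(i + 1, j + 1)} D')
    (k : ℕ)
    (hk : k = Set.ncard {e | e ∈ D.chords ∧ e ≠ s(i + 1, j + 1) ∧ Chord.Crosses e s(i, j)}) :
    D.T ≡ D'.T + k [MOD 2] ∧
      (D.EvenlyInterlaced → Odd ((D.T : ℤ) - (D'.T : ℤ))) := by
  classical
  haveI : NeZero (2 * (n + 2)) := ⟨by omega⟩
  haveI : Fact (1 < 2 * (n + 2)) := ⟨by omega⟩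
  obtain ⟨ho1, ho2, ho3⟩ := hord
  have e11 : i + 1 - i = (1 : ZMod (2 * (n + 2))) := by ring
  have hval1 : (1 : ZMod (2 * (n + 2))).val = 1 := ZMod.val_one _
  have vi : (i - i).val = 0 := by rw [sub_self, ZMod.val_zero]
  have vi1 : (i + 1 - i).val = 1 := by rw [e11, hval1]
  rw [vi1] at ho2
  have e12 : j + 1 - i = (j - i) + 1 := by ring
  have vj1 : (j + 1 - i).val = (j - i).val + 1 := by
    rw [e12]
    refine val_add_one_of_ne fun h => ?_
    rw [e12, h, ZMod.val_zero] at ho3; omega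
  have hJ1 : 1 < (j - i).val := ho2
  have hJm : (j - i).val + 1 < 2 * (n + 2) := vj1 ▸ ZMod.val_lt _
  -- distinctness of the four marked points
  have hd1 : i ≠ i + 1 := ne_iff_val_ne.mpr (by rw [vi, vi1]; omega)
  have hd2 : i ≠ j := ne_iff_val_ne.mpr (by rw [vi]; omega)
  have hd3 : i ≠ j + 1 := ne_iff_val_ne.mpr (by rw [vi, vj1]; omega)
  have hd4 : i + 1 ≠ j := ne_iff_val_ne.mpr (by rw [vi1]; omega)
  have hd5 : i + 1 ≠ j + 1 := ne_iff_val_ne.mpr (by rw [vi1, vj1]; omega)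
  have hd6 : j ≠ j + 1 := ne_iff_val_ne.mpr (by rw [vj1]; omega)
  have hαβ : s(i, j) ≠ s(i + 1, j + 1) := by
    rw [Ne, Sym2.eq_iff]
    rintro (⟨h, h'⟩ | ⟨h, h'⟩)
    · exact hd1 h
    · exact hd3 h
  -- involution values
  have hinvi : D.inv i = j := inv_eq_of_chord D hα
  have hinvj : D.inv j = i := by rw [← hinvi, D.involutive]
  have hinvi1 : D.inv (i + 1) = j + 1 := inv_eq_of_chord D hβ
  have hinvj1 : D.inv (j + 1) = i + 1 := by rw [← hinvi1, D.involutive]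
  -- representation of other chords
  have hrep : ∀ e ∈ D.chords, e ≠ s(i, j) → e ≠ s(i + 1, j + 1) →
      ∃ c d : ZMod (2 * (n + 2)), e = s(c, d) ∧ c ≠ d ∧
        c ≠ i ∧ c ≠ i + 1 ∧ c ≠ j ∧ c ≠ j + 1 ∧
        d ≠ i ∧ d ≠ i + 1 ∧ d ≠ j ∧ d ≠ j + 1 := by
    intro e he hea heb
    obtain ⟨x, rfl⟩ := he
    have hxi : x ≠ i := fun h => hea (by rw [h, hinvi])
    have hxi1 : x ≠ i + 1 := fun h => heb (by rw [h, hinvi1])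
    have hxj : x ≠ j := fun h => hea (by rw [h, hinvj]; exact Sym2.eq_swap)
    have hxj1 : x ≠ j + 1 := fun h => heb (by rw [h, hinvj1]; exact Sym2.eq_swap)
    have hyi : D.inv x ≠ i := fun h => hxj (by rw [← hinvi, ← h, D.involutive])
    have hyi1 : D.inv x ≠ i + 1 := fun h => hxj1 (by rw [← hinvi1, ← h, D.involutive])
    have hyj : D.inv x ≠ j := fun h => hxi (by rw [← hinvj, ← h, D.involutive])
    have hyj1 : D.inv x ≠ j + 1 := fun h => hxi1 (by rw [← hinvj1, ← h, D.involutive])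
    exact ⟨x, D.inv x, rfl, (D.fixedPointFree x).symm, hxi, hxi1, hxj, hxj1,
      hyi, hyi1, hyj, hyj1⟩
  -- crossing transfer for generic chords
  have key : ∀ e ∈ D.chords, e ≠ s(i, j) → e ≠ s(i + 1, j + 1) →
      (Chord.Crosses e s(i, j) ↔ Chord.Crosses e s(i + 1, j + 1)) ∧
      (Chord.Crosses s(i, j) e ↔ Chord.Crosses s(i + 1, j + 1) e) ∧
      (Chord.Crosses e s(i, j) ↔ Chord.Crosses s(i, j) e) ∧
      (Chord.Crosses e s(i + 1, j + 1) ↔ Chord.Crosses s(i + 1, j + 1) e) := by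
    intro e he hea heb
    obtain ⟨c, d, rfl, hcd, hci, hci1, hcj, hcj1, hdi, hdi1, hdj, hdj1⟩ :=
      hrep e he hea heb
    have hc1 : Chord.Crosses s(c, d) s(i, j) ↔ Xor' (InArc c d i) (InArc c d j) :=
      crosses_iff hcd hci.symm hdi.symm hcj.symm hdj.symm
    have hc2 : Chord.Crosses s(c, d) s(i + 1, j + 1) ↔
        Xor' (InArc c d (i + 1)) (InArc c d (j + 1)) :=
      crosses_iff hcd hci1.symm hdi1.symm hcj1.symm hdj1.symm
    have hc3 : Chord.Crosses s(i, j) s(c, d) ↔ Xor' (InArc i j c) (InArc i j d) :=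
      crosses_iff hd2 hci hcj hdi hdj
    have hc4 : Chord.Crosses s(i + 1, j + 1) s(c, d) ↔
        Xor' (InArc (i + 1) (j + 1) c) (InArc (i + 1) (j + 1) d) :=
      crosses_iff hd5 hci1 hcj1 hdi1 hdj1
    have hsi : InArc c d i ↔ InArc c d (i + 1) :=
      inArc_shift hci.symm hdi.symm hci1.symm hdi1.symm
    have hsj : InArc c d j ↔ InArc c d (j + 1) :=
      inArc_shift hcj.symm hdj.symm hcj1.symm hdj1.symm
    have hpc : InArc i j c ↔ InArc (i + 1) (j + 1) c :=
      inArc_succ_pair hJ1 hJm hci hci1 hcj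
    have hpd : InArc i j d ↔ InArc (i + 1) (j + 1) d :=
      inArc_succ_pair hJ1 hJm hdi hdi1 hdj
    refine ⟨?_, ?_, ?_, ?_⟩
    · rw [hc1, hc2, hsi, hsj]
    · rw [hc3, hc4, hpc, hpd]
    · rw [hc1, hc3]
      exact xor_inArc_symm hcd hci hcj hdi hdj hd2
    · rw [hc2, hc4]
      exact xor_inArc_symm hcd hci1 hcj1 hdi1 hdj1 hd5
  -- direct crossings between the two special chords
  have hcαβ : Chord.Crosses s(i, j) s(i + 1, j + 1) := by
    refine ⟨i, j, i + 1, j + 1, rfl, rfl, Or.inl ⟨⟨?_, ?_⟩, ?_⟩⟩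
    · rw [vi1]; omega
    · rw [vi1]; omega
    · rintro ⟨-, h2⟩; rw [vj1] at h2; omega
  have hcβα : Chord.Crosses s(i + 1, j + 1) s(i, j) := by
    refine ⟨i + 1, j + 1, i, j, rfl, rfl, Or.inr ⟨⟨?_, ?_⟩, ?_⟩⟩
    · have ej2 : j - (i + 1) = (j - i) - 1 := by ring
      rw [ej2, val_sub' (j - i) 1, hval1]
      split_ifs <;> omega
    · have ej2 : j - (i + 1) = (j - i) - 1 := by ring
      have ej : j + 1 - (i + 1) = j - i := by ring
      rw [ej2, ej, val_sub' (j - i) 1, hval1]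
      split_ifs <;> omega
    · rintro ⟨h1, h2⟩
      have ei : i - (i + 1) = (0 : ZMod (2 * (n + 2))) - 1 := by ring
      have ej : j + 1 - (i + 1) = j - i := by ring
      rw [ei, val_sub' 0 1, ZMod.val_zero, hval1, ej] at h2
      split_ifs at h2 <;> omega
  -- the set K from the statement
  set Kset : Set (Chord (2 * (n + 2))) :=
    {e | e ∈ D.chords ∧ e ≠ s(i + 1, j + 1) ∧ Chord.Crosses e s(i, j)} with hKset
  have hKne : ∀ e ∈ Kset, e ≠ s(i, j) :=
    fun e he h => not_crosses_self _ (h ▸ he.2.2)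
  -- triples containing both special chords
  have hTab : {P | D.IsTripleChord P ∧ s(i, j) ∈ P ∧ s(i + 1, j + 1) ∈ P} =
      (fun e => ({s(i, j), s(i + 1, j + 1), e} : Finset (Chord (2 * (n + 2))))) '' Kset := by
    ext P
    constructor
    · rintro ⟨⟨hcard, hmem, hcross⟩, hαP, hβP⟩
      obtain ⟨e, heP, heα, heβ, hPe⟩ := triple_extract hcard hαP hβP hαβ
      exact ⟨e, ⟨hmem e heP, heβ, hcross e heP _ hαP heα⟩, hPe.symm⟩
    · rintro ⟨e, ⟨heC, heβ, hecα⟩, rfl⟩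
      have heα : e ≠ s(i, j) := fun h => not_crosses_self _ (h ▸ hecα)
      obtain ⟨k1, k2, k3, -⟩ := key e heC heα heβ
      have hcαe : Chord.Crosses s(i, j) e := k3.mp hecα
      have heβ' : Chord.Crosses e s(i + 1, j + 1) := k1.mp hecα
      have hcβe : Chord.Crosses s(i + 1, j + 1) e := k2.mp hcαe
      refine ⟨⟨?_, ?_, ?_⟩, ?_, ?_⟩
      · exact Finset.card_eq_three.mpr ⟨_, _, _, hαβ, Ne.symm heα, Ne.symm heβ, rfl⟩
      · intro f hf
        simp only [Finset.mem_insert, Finset.mem_singleton] at hf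
        rcases hf with rfl | rfl | rfl
        · exact hα
        · exact hβ
        · exact heC
      · intro x hx y hy hxy
        simp only [Finset.mem_insert, Finset.mem_singleton] at hx hy
        rcases hx with rfl | rfl | rfl <;> rcases hy with rfl | rfl | rfl
        · exact absurd rfl hxy
        · exact hcαβ
        · exact hcαe
        · exact hcβα
        · exact absurd rfl hxy
        · exact hcβe
        · exact hecα
        · exact heβ'
        · exact absurd rfl hxy
      · simp
      · simp
  have hKinj : Set.InjOn
      (fun e => ({s(i, j), s(i + 1, j + 1), e} : Finset (Chord (2 * (n + 2))))) Kset := by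
    intro e he f hf h
    have heα := hKne e he
    have := Finset.ext_iff.mp h e
    simp only [Finset.mem_insert, Finset.mem_singleton] at this
    rcases this.mp (by tauto) with h' | h' | h'
    · exact absurd h' heα
    · exact absurd h' he.2.1
    · exact h'
  -- swapping the special chord in triples containing exactly one of them
  have hTbTa : {P | D.IsTripleChord P ∧ s(i, j) ∉ P ∧ s(i + 1, j + 1) ∈ P} =
      (fun P => insert s(i + 1, j + 1) (P.erase s(i, j))) ''
        {P | D.IsTripleChord P ∧ s(i, j) ∈ P ∧ s(i + 1, j + 1) ∉ P} := by
    ext Q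
    constructor
    · rintro ⟨⟨hcard, hmem, hcross⟩, hαQ, hβQ⟩
      have hα' : s(i, j) ∉ Q.erase s(i + 1, j + 1) :=
        fun h => hαQ (Finset.mem_of_mem_erase h)
      refine ⟨insert s(i, j) (Q.erase s(i + 1, j + 1)), ⟨⟨?_, ?_, ?_⟩, ?_, ?_⟩, ?_⟩
      · rw [Finset.card_insert_of_notMem hα', Finset.card_erase_of_mem hβQ, hcard]
      · intro f hf
        rcases Finset.mem_insert.mp hf with rfl | hf'
        · exact hα
        · exact hmem f (Finset.mem_of_mem_erase hf')
      · intro x hx y hy hxy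
        rcases Finset.mem_insert.mp hx with rfl | hx' <;>
          rcases Finset.mem_insert.mp hy with rfl | hy'
        · exact absurd rfl hxy
        · obtain ⟨hyβ, hyQ⟩ := Finset.mem_erase.mp hy'
          have hyα : y ≠ s(i, j) := fun h => hαQ (h ▸ hyQ)
          exact (key y (hmem y hyQ) hyα hyβ).2.1.mpr
            (hcross _ hβQ y hyQ (Ne.symm hyβ))
        · obtain ⟨hxβ, hxQ⟩ := Finset.mem_erase.mp hx'
          have hxα : x ≠ s(i, j) := fun h => hαQ (h ▸ hxQ)
          exact (key x (hmem x hxQ) hxα hxβ).1.mpr (hcross x hxQ _ hβQ hxβ)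
        · exact hcross x (Finset.mem_of_mem_erase hx') y (Finset.mem_of_mem_erase hy') hxy
      · exact Finset.mem_insert_self _ _
      · intro h
        rcases Finset.mem_insert.mp h with h' | h'
        · exact hαβ h'.symm
        · exact Finset.notMem_erase _ _ h'
      · show insert s(i + 1, j + 1) _ = Q
        rw [Finset.erase_insert hα', Finset.insert_erase hβQ]
    · rintro ⟨P, ⟨⟨hcard, hmem, hcross⟩, hαP, hβP⟩, rfl⟩
      have hβ' : s(i + 1, j + 1) ∉ P.erase s(i, j) :=
        fun h => hβP (Finset.mem_of_mem_erase h)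
      refine ⟨⟨?_, ?_, ?_⟩, ?_, ?_⟩
      · rw [Finset.card_insert_of_notMem hβ', Finset.card_erase_of_mem hαP, hcard]
      · intro f hf
        rcases Finset.mem_insert.mp hf with rfl | hf'
        · exact hβ
        · exact hmem f (Finset.mem_of_mem_erase hf')
      · intro x hx y hy hxy
        rcases Finset.mem_insert.mp hx with rfl | hx' <;>
          rcases Finset.mem_insert.mp hy with rfl | hy'
        · exact absurd rfl hxy
        · obtain ⟨hyα, hyQ⟩ := Finset.mem_erase.mp hy'
          have hyβ : y ≠ s(i + 1, j + 1) := fun h => hβP (h ▸ hyQ)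
          exact (key y (hmem y hyQ) hyα hyβ).2.1.mp
            (hcross _ hαP y hyQ (Ne.symm hyα))
        · obtain ⟨hxα, hxQ⟩ := Finset.mem_erase.mp hx'
          have hxβ : x ≠ s(i + 1, j + 1) := fun h => hβP (h ▸ hxQ)
          exact (key x (hmem x hxQ) hxα hxβ).1.mp (hcross x hxQ _ hαP hxα)
        · exact hcross x (Finset.mem_of_mem_erase hx') y (Finset.mem_of_mem_erase hy') hxy
      · intro h
        rcases Finset.mem_insert.mp h with h' | h'
        · exact hαβ h'
        · exact Finset.notMem_erase _ _ h'
      · exact Finset.mem_insert_self _ _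
  have hTbinj : Set.InjOn (fun P => insert s(i + 1, j + 1) (P.erase s(i, j)))
      {P | D.IsTripleChord P ∧ s(i, j) ∈ P ∧ s(i + 1, j + 1) ∉ P} := by
    intro P hP P' hP' h
    have hβ1 : s(i + 1, j + 1) ∉ P.erase s(i, j) :=
      fun hh => hP.2.2 (Finset.mem_of_mem_erase hh)
    have hβ2 : s(i + 1, j + 1) ∉ P'.erase s(i, j) :=
      fun hh => hP'.2.2 (Finset.mem_of_mem_erase hh)
    have h1 : P.erase s(i, j) = P'.erase s(i, j) := by
      rw [← Finset.erase_insert hβ1, ← Finset.erase_insert hβ2]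
      simp only at h
      rw [h]
    rw [← Finset.insert_erase hP.2.1, ← Finset.insert_erase hP'.2.1, h1]
  -- the deletion bijection
  set S : Set (Chord (2 * (n + 2))) := {s(i, j), s(i + 1, j + 1)} with hS
  obtain ⟨φ, hφ⟩ := hdel
  let ψ : Chord (2 * (n + 2)) → Chord (2 * n) :=
    fun e => if h : e ∈ D.chords ∧ e ∉ S then (φ ⟨e, h⟩).1 else s(0, 0)
  let ψ' : Chord (2 * n) → Chord (2 * (n + 2)) :=
    fun e => if h : e ∈ D'.chords then (φ.symm ⟨e, h⟩).1 else s(0, 0)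
  have hψdef : ∀ e (h : e ∈ D.chords ∧ e ∉ S), ψ e = (φ ⟨e, h⟩).1 :=
    fun e h => dif_pos h
  have hψmem : ∀ e (h : e ∈ D.chords ∧ e ∉ S), ψ e ∈ D'.chords := by
    intro e h; rw [hψdef e h]; exact (φ ⟨e, h⟩).2
  have hψ'def : ∀ e (h : e ∈ D'.chords), ψ' e = (φ.symm ⟨e, h⟩).1 :=
    fun e h => dif_pos h
  have hψ'mem : ∀ e (h : e ∈ D'.chords), ψ' e ∈ D.chords ∧ ψ' e ∉ S := by
    intro e h; rw [hψ'def e h]; exact (φ.symm ⟨e, h⟩).2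
  have hψψ' : ∀ e (h : e ∈ D'.chords), ψ (ψ' e) = e := by
    intro e h
    rw [hψ'def e h, hψdef _ (φ.symm ⟨e, h⟩).2]
    show (φ (φ.symm ⟨e, h⟩)).1 = e
    rw [Equiv.apply_symm_apply]
  have hψinj : ∀ e f (he : e ∈ D.chords ∧ e ∉ S) (hf : f ∈ D.chords ∧ f ∉ S),
      ψ e = ψ f → e = f := by
    intro e f he hf h
    rw [hψdef e he, hψdef f hf] at h
    exact congrArg Subtype.val (φ.injective (Subtype.ext h))
  have hψ'inj : ∀ e f (he : e ∈ D'.chords) (hf : f ∈ D'.chords),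
      ψ' e = ψ' f → e = f := by
    intro e f he hf h
    rw [hψ'def e he, hψ'def f hf] at h
    exact congrArg Subtype.val (φ.symm.injective (Subtype.ext h))
  have hψcross : ∀ e f (he : e ∈ D.chords ∧ e ∉ S) (hf : f ∈ D.chords ∧ f ∉ S),
      (Chord.Crosses e f ↔ Chord.Crosses (ψ e) (ψ f)) := by
    intro e f he hf
    rw [hψdef e he, hψdef f hf]
    exact hφ ⟨e, he⟩ ⟨f, hf⟩
  have hgood : ∀ P ∈ {P | D.IsTripleChord P ∧ s(i, j) ∉ P ∧ s(i + 1, j + 1) ∉ P},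
      ∀ e ∈ P, e ∈ D.chords ∧ e ∉ S := by
    rintro P ⟨⟨-, hmem, -⟩, hαP, hβP⟩ e he
    refine ⟨hmem e he, ?_⟩
    rw [hS, Set.mem_insert_iff, Set.mem_singleton_iff]
    rintro (rfl | rfl)
    · exact hαP he
    · exact hβP he
  have hT0 : {Q | D'.IsTripleChord Q} = (fun P => P.image ψ) ''
      {P | D.IsTripleChord P ∧ s(i, j) ∉ P ∧ s(i + 1, j + 1) ∉ P} := by
    ext Q
    constructor
    · rintro ⟨hcard, hmem, hcross⟩
      refine ⟨Q.image ψ', ⟨⟨?_, ?_, ?_⟩, ?_, ?_⟩, ?_⟩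
      · rw [Finset.card_image_of_injOn fun e he f hf h =>
          hψ'inj e f (hmem e he) (hmem f hf) h, hcard]
      · intro f hf
        obtain ⟨e, he, rfl⟩ := Finset.mem_image.mp hf
        exact (hψ'mem e (hmem e he)).1
      · intro x hx y hy hxy
        obtain ⟨e, he, rfl⟩ := Finset.mem_image.mp hx
        obtain ⟨f, hf, rfl⟩ := Finset.mem_image.mp hy
        have hef : e ≠ f := fun h => hxy (by rw [h])
        have := (hψcross (ψ' e) (ψ' f) (hψ'mem e (hmem e he))
          (hψ'mem f (hmem f hf))).mpr
        rw [hψψ' e (hmem e he), hψψ' f (hmem f hf)] at this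
        exact this (hcross e he f hf hef)
      · intro h
        obtain ⟨e, he, heq⟩ := Finset.mem_image.mp h
        exact (hψ'mem e (hmem e he)).2 (heq ▸ Set.mem_insert _ _)
      · intro h
        obtain ⟨e, he, heq⟩ := Finset.mem_image.mp h
        refine (hψ'mem e (hmem e he)).2 (heq ▸ ?_)
        rw [hS]
        exact Set.mem_insert_iff.mpr (Or.inr rfl)
      · show (Q.image ψ').image ψ = Q
        rw [Finset.image_image]
        rw [show Finset.image (ψ ∘ ψ') Q = Finset.image id Q from
          Finset.image_congr fun e he => hψψ' e (hmem e he)]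
        exact Finset.image_id
    · rintro ⟨P, hP, rfl⟩
      obtain ⟨⟨hcard, hmem, hcross⟩, hαP, hβP⟩ := hP
      have hPgood := hgood P ⟨⟨hcard, hmem, hcross⟩, hαP, hβP⟩
      refine ⟨?_, ?_, ?_⟩
      · rw [Finset.card_image_of_injOn fun e he f hf h =>
          hψinj e f (hPgood e he) (hPgood f hf) h, hcard]
      · intro f hf
        obtain ⟨e, he, rfl⟩ := Finset.mem_image.mp hf
        exact hψmem e (hPgood e he)
      · intro x hx y hy hxy
        obtain ⟨e, he, rfl⟩ := Finset.mem_image.mp hx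
        obtain ⟨f, hf, rfl⟩ := Finset.mem_image.mp hy
        have hef : e ≠ f := fun h => hxy (by rw [h])
        exact (hψcross e f (hPgood e he) (hPgood f hf)).mp (hcross e he f hf hef)
  have hT0inj : Set.InjOn (fun P => P.image ψ)
      {P | D.IsTripleChord P ∧ s(i, j) ∉ P ∧ s(i + 1, j + 1) ∉ P} := by
    intro P hP P' hP' h
    simp only at h
    ext e
    constructor
    · intro he
      have : ψ e ∈ P'.image ψ := h ▸ Finset.mem_image_of_mem ψ he
      obtain ⟨f, hf, hfe⟩ := Finset.mem_image.mp this
      rwa [hψinj f e (hgood P' hP' f hf) (hgood P hP e he) hfe] at hf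
    · intro he
      have : ψ e ∈ P.image ψ := h ▸ Finset.mem_image_of_mem ψ he
      obtain ⟨f, hf, hfe⟩ := Finset.mem_image.mp this
      rwa [hψinj f e (hgood P hP f hf) (hgood P' hP' e he) hfe] at hf
  -- counting
  have hsplit : D.T =
      (Set.ncard {P | D.IsTripleChord P ∧ s(i, j) ∉ P ∧ s(i + 1, j + 1) ∉ P} +
       Set.ncard {P | D.IsTripleChord P ∧ s(i, j) ∈ P ∧ s(i + 1, j + 1) ∉ P}) +
      (Set.ncard {P | D.IsTripleChord P ∧ s(i, j) ∉ P ∧ s(i + 1, j + 1) ∈ P} +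
       Set.ncard {P | D.IsTripleChord P ∧ s(i, j) ∈ P ∧ s(i + 1, j + 1) ∈ P}) := by
    have hu : {P | D.IsTripleChord P} =
        ({P | D.IsTripleChord P ∧ s(i, j) ∉ P ∧ s(i + 1, j + 1) ∉ P} ∪
         {P | D.IsTripleChord P ∧ s(i, j) ∈ P ∧ s(i + 1, j + 1) ∉ P}) ∪
        ({P | D.IsTripleChord P ∧ s(i, j) ∉ P ∧ s(i + 1, j + 1) ∈ P} ∪
         {P | D.IsTripleChord P ∧ s(i, j) ∈ P ∧ s(i + 1, j + 1) ∈ P}) := by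
      ext P
      simp only [Set.mem_union, Set.mem_setOf_eq]
      by_cases h1 : s(i, j) ∈ P <;> by_cases h2 : s(i + 1, j + 1) ∈ P <;> tauto
    show Set.ncard {P | D.IsTripleChord P} = _
    rw [hu, Set.ncard_union_eq ?d1 (Set.toFinite _) (Set.toFinite _),
      Set.ncard_union_eq ?d2 (Set.toFinite _) (Set.toFinite _),
      Set.ncard_union_eq ?d3 (Set.toFinite _) (Set.toFinite _)]
    case d1 =>
      rw [Set.disjoint_left]
      rintro P (hP | hP) (hP' | hP') <;>
        simp only [Set.mem_setOf_eq] at hP hP' <;> tauto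
    case d2 =>
      rw [Set.disjoint_left]
      intro P hP hP'
      simp only [Set.mem_setOf_eq] at hP hP'
      tauto
    case d3 =>
      rw [Set.disjoint_left]
      intro P hP hP'
      simp only [Set.mem_setOf_eq] at hP hP'
      tauto
  have eT0 : D'.T =
      Set.ncard {P | D.IsTripleChord P ∧ s(i, j) ∉ P ∧ s(i + 1, j + 1) ∉ P} := by
    show Set.ncard {Q | D'.IsTripleChord Q} = _
    rw [hT0, Set.ncard_image_of_injOn hT0inj]
  have eTab : Set.ncard {P | D.IsTripleChord P ∧ s(i, j) ∈ P ∧ s(i + 1, j + 1) ∈ P} =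
      Kset.ncard := by
    rw [hTab, Set.ncard_image_of_injOn hKinj]
  have eTb : Set.ncard {P | D.IsTripleChord P ∧ s(i, j) ∉ P ∧ s(i + 1, j + 1) ∈ P} =
      Set.ncard {P | D.IsTripleChord P ∧ s(i, j) ∈ P ∧ s(i + 1, j + 1) ∉ P} := by
    rw [hTbTa, Set.ncard_image_of_injOn hTbinj]
  rw [eTab, eTb] at hsplit
  rw [← eT0] at hsplit
  constructor
  · show D.T % 2 = (D'.T + k) % 2
    omega
  · intro hEI
    have hEvenα := hEI s(i, j) hα
    have hsetEq : {f | f ∈ D.chords ∧ Chord.Crosses s(i, j) f} =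
        insert s(i + 1, j + 1) Kset := by
      ext f
      simp only [Set.mem_setOf_eq, Set.mem_insert_iff]
      constructor
      · rintro ⟨hfC, hcr⟩
        by_cases hfβ : f = s(i + 1, j + 1)
        · exact Or.inl hfβ
        · have hfα : f ≠ s(i, j) := fun h => not_crosses_self _ (h ▸ hcr)
          exact Or.inr ⟨hfC, hfβ, (key f hfC hfα hfβ).2.2.1.mpr hcr⟩
      · rintro (rfl | ⟨hfC, hfβ, hcr⟩)
        · exact ⟨hβ, hcαβ⟩
        · have hfα : f ≠ s(i, j) := fun h => not_crosses_self _ (h ▸ hcr)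
          exact ⟨hfC, (key f hfC hfα hfβ).2.2.1.mp hcr⟩
    have hβK : s(i + 1, j + 1) ∉ Kset := fun h => h.2.1 rfl
    rw [hsetEq, Set.ncard_insert_of_notMem hβK (Set.toFinite _)] at hEvenα
    obtain ⟨t, ht⟩ := hEvenα
    rw [Int.odd_iff]
    omega
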